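/- Let I = (0,1), -1 < β ≤ 0, 1 ≤ p < ∞, and α ∈ ℝ. The power weight x^α belongs to QB_{β,p}(I) (i.e., there is C > 0 with ∫_r^1 (r/x)^p x^α dx ≤ C ∫_0^r (x/r)^{βp} x^α dx for all 0 < r ≤ 1) if and only if -βp - 1 < α < p - 1. -/

import Mathlib

open MeasureTheory Set Real Filter
open scoped ENNReal

noncomputable section

/-- `w` satisfies the `QB_{β,p}` inequality on `(0,∞)` with constant `C`. -/
def QBcond (β p C : ℝ) (w : ℝ → ℝ) : Prop :=
  ∀ r : ℝ, 0 < r →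
    (∫ x in Ioi r, (r / x) ^ p * w x) ≤ C * ∫ x in Ioc (0:ℝ) r, (x / r) ^ (β * p) * w x

/-- `w ∈ QB_{β,p}`. -/
def QB (β p : ℝ) (w : ℝ → ℝ) : Prop := ∃ C : ℝ, 0 < C ∧ QBcond β p C w

/-- The `QB_{β,p}` constant `[w]_{QB_{β,p}}`. -/
def QBconst (β p : ℝ) (w : ℝ → ℝ) : ℝ := sInf {D : ℝ | QBcond β p (D - 1) w}

/-- `f ∈ Q_β`: `f ≥ 0` and `x^{-β} f x` is non-increasing on `(0,∞)`. -/
def Qmono (β : ℝ) (f : ℝ → ℝ) : Prop :=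
  (∀ x, 0 ≤ f x) ∧ AntitoneOn (fun x => x ^ (-β) * f x) (Ioi (0:ℝ))

/-- A weight: nonnegative and integrable on `(0,r]` for every `r > 0`. -/
def IsWeight (w : ℝ → ℝ) : Prop :=
  (∀ x, 0 ≤ w x) ∧ ∀ r : ℝ, 0 < r → IntegrableOn w (Ioc 0 r)

/-- `Ψ(x) = ∫_0^x ψ`. -/
def Psi (ψ : ℝ → ℝ) (x : ℝ) : ℝ := ∫ t in Ioc (0:ℝ) x, ψ t

/-- `w` satisfies the `QB_{β,ψ,p}` inequality with constant `C`. -/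
def QBpsiCond (β p C : ℝ) (ψ w : ℝ → ℝ) : Prop :=
  ∀ r : ℝ, 0 < r →
    (∫ x in Ioi r, (Psi ψ r / Psi ψ x) ^ p * w x)
      ≤ C * ∫ x in Ioc (0:ℝ) r, (Psi ψ x / Psi ψ r) ^ (β * p) * w x

/-- `w ∈ QB_{β,ψ,p}`. -/
def QBpsi (β p : ℝ) (ψ w : ℝ → ℝ) : Prop := ∃ C : ℝ, 0 < C ∧ QBpsiCond β p C ψ w

/-- The `QB_{β,ψ,p}` constant. -/
def QBpsiConst (β p : ℝ) (ψ w : ℝ → ℝ) : ℝ := sInf {D : ℝ | QBpsiCond β p (D - 1) ψ w}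

/-- `w` satisfies the `QB_{β,p}(I)` inequality on `I = (0,1)` with constant `C`. -/
def QBIcond (β p C : ℝ) (w : ℝ → ℝ) : Prop :=
  ∀ r : ℝ, 0 < r → r ≤ 1 →
    (∫ x in Ioc r (1:ℝ), (r / x) ^ p * w x) ≤ C * ∫ x in Ioc (0:ℝ) r, (x / r) ^ (β * p) * w x

/-- `w ∈ QB_{β,p}(I)`. -/
def QBI (β p : ℝ) (w : ℝ → ℝ) : Prop := ∃ C : ℝ, 0 < C ∧ QBIcond β p C w

/-- The `QB_{β,p}(I)` constant. -/
def QBIconst (β p : ℝ) (w : ℝ → ℝ) : ℝ := sInf {D : ℝ | QBIcond β p (D - 1) w}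

/-- `f ∈ Q_β(I)`: `f ≥ 0` and `x^{-β} f x` non-increasing on `(0,1)`. -/
def QmonoI (β : ℝ) (f : ℝ → ℝ) : Prop :=
  (∀ x, 0 ≤ f x) ∧ AntitoneOn (fun x => x ^ (-β) * f x) (Ioo (0:ℝ) 1)

/-- The Hardy averaging operator. -/
def Hardy (f : ℝ → ℝ) (x : ℝ) : ℝ := (1 / x) * ∫ t in Ioc (0:ℝ) x, f t

/-- The weighted grand Lebesgue norm `‖f‖_{L_w^{p),θ}(I)}` on `I = (0,1)`. -/
def grandNorm (p θ : ℝ) (w f : ℝ → ℝ) : ℝ≥0∞ :=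
  ⨆ ε ∈ Ioo (0:ℝ) (p - 1),
    (ENNReal.ofReal (ε ^ θ) *
      ∫⁻ x in Ioo (0:ℝ) 1, ENNReal.ofReal (|f x| ^ (p - ε) * w x)) ^ (1 / (p - ε))


lemma ioc_rpow_integral {r s : ℝ} (hr : 0 < r) (hs : -1 < s) :
    ∫ x in Ioc (0:ℝ) r, x ^ s = r ^ (s+1) / (s+1) := by
  rw [← intervalIntegral.integral_of_le hr.le, integral_rpow (Or.inl hs),
    Real.zero_rpow (by linarith), sub_zero]

lemma rhs_eq {β p α r : ℝ} (hr : 0 < r) (hs : -1 < β*p+α) :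
    ∫ x in Ioc (0:ℝ) r, (x/r)^(β*p) * x^α = r^(α+1) / (β*p+α+1) := by
  have h1 : EqOn (fun x : ℝ => (x/r)^(β*p) * x^α)
      (fun x : ℝ => r^(-(β*p)) * x^(β*p+α)) (Ioc (0:ℝ) r) := by
    intro x hx
    simp only
    rw [Real.div_rpow hx.1.le hr.le, Real.rpow_neg hr.le, Real.rpow_add hx.1]
    ring
  rw [setIntegral_congr_fun measurableSet_Ioc h1, integral_const_mul,
      ioc_rpow_integral hr hs, mul_div_assoc', ← Real.rpow_add hr]
  ring_nf

lemma rhs_zero {β p α r : ℝ} (hr : 0 < r) (hs : β*p+α ≤ -1) :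
    ∫ x in Ioc (0:ℝ) r, (x/r)^(β*p) * x^α = 0 := by
  apply integral_undef
  intro h
  have h1 : EqOn (fun x : ℝ => (x/r)^(β*p) * x^α)
      (fun x : ℝ => r^(-(β*p)) * x^(β*p+α)) (Ioc (0:ℝ) r) := by
    intro x hx
    simp only
    rw [Real.div_rpow hx.1.le hr.le, Real.rpow_neg hr.le, Real.rpow_add hx.1]
    ring
  have h2 : IntegrableOn (fun x : ℝ => r^(-(β*p)) * x^(β*p+α)) (Ioc (0:ℝ) r) :=
    (IntegrableOn.congr_fun h h1 measurableSet_Ioc)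
  have h3 : IntegrableOn (fun x : ℝ => x^(β*p+α)) (Ioc (0:ℝ) r) := by
    have hne : r ^ (-(β*p)) ≠ 0 := (Real.rpow_pos_of_pos hr _).ne'
    have := h2.const_mul (r^(-(β*p)))⁻¹
    simpa [IntegrableOn, ← mul_assoc, inv_mul_cancel₀ hne] using this
  have h4 : IntegrableOn (fun x : ℝ => x^(β*p+α)) (Ioo (0:ℝ) r) :=
    h3.mono_set Ioo_subset_Ioc_self
  rw [intervalIntegral.integrableOn_Ioo_rpow_iff hr] at h4
  linarith

lemma lhs_eq {p α r : ℝ} (hr : 0 < r) :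
    ∫ x in Ioc r (1:ℝ), (r/x)^p * x^α = r^p * ∫ x in Ioc r (1:ℝ), x^(α-p) := by
  rw [← integral_const_mul]
  apply setIntegral_congr_fun measurableSet_Ioc
  intro x hx
  have hx0 : 0 < x := lt_trans hr hx.1
  simp only
  rw [Real.div_rpow hr.le hx0.le, Real.rpow_sub hx0]
  ring

lemma tail_eq {s r : ℝ} (hr : 0 < r) (hr1 : r ≤ 1) (hs : s ≠ -1) :
    ∫ x in Ioc r (1:ℝ), x ^ s = (1 - r^(s+1))/(s+1) := by
  have h0 : (0:ℝ) ∉ Set.uIcc r 1 := by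
    rw [Set.uIcc_of_le hr1]
    rintro ⟨h1, -⟩; linarith
  rw [← intervalIntegral.integral_of_le hr1, integral_rpow (Or.inr ⟨hs, h0⟩), Real.one_rpow]

lemma tail_log {r : ℝ} (hr : 0 < r) (hr1 : r ≤ 1) :
    ∫ x in Ioc r (1:ℝ), x ^ (-1 : ℝ) = - Real.log r := by
  have h0 : (0:ℝ) ∉ Set.uIcc r 1 := by
    rw [Set.uIcc_of_le hr1]
    rintro ⟨h1, -⟩; linarith
  rw [← intervalIntegral.integral_of_le hr1]
  simp_rw [Real.rpow_neg_one]
  rw [integral_inv h0, one_div, Real.log_inv]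

lemma lhs_pos {p α r : ℝ} (hr : 0 < r) (hr1 : r < 1) :
    0 < ∫ x in Ioc r (1:ℝ), (r/x)^p * x^α := by
  have h0 : (0:ℝ) ∉ Set.uIcc r 1 := by
    rw [Set.uIcc_of_le hr1.le]
    rintro ⟨ha, -⟩; linarith
  rw [lhs_eq hr]
  apply mul_pos (Real.rpow_pos_of_pos hr p)
  rw [← intervalIntegral.integral_of_le hr1.le]
  apply intervalIntegral.intervalIntegral_pos_of_pos_on
  · exact intervalIntegral.intervalIntegrable_rpow (Or.inr h0)
  · intro x hx
    exact Real.rpow_pos_of_pos (lt_trans hr hx.1) _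
  · exact hr1

theorem power_weight_mem_QBI_iff' (p β α : ℝ) (hp : 1 ≤ p) (hβ1 : -1 < β) (hβ0 : β ≤ 0) :
    (∃ C : ℝ, 0 < C ∧ ∀ r : ℝ, 0 < r → r ≤ 1 →
      (∫ x in Ioc r (1:ℝ), (r / x) ^ p * (fun x : ℝ => x ^ α) x)
        ≤ C * ∫ x in Ioc (0:ℝ) r, (x / r) ^ (β * p) * (fun x : ℝ => x ^ α) x)
      ↔ (-(β * p) - 1 < α ∧ α < p - 1) := by
  simp only
  constructor
  · rintro ⟨C, hC, hQB⟩
    -- Step 1: α > -βp - 1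
    have h1 : -(β * p) - 1 < α := by
      by_contra h
      push_neg at h
      have hs : β * p + α ≤ -1 := by linarith
      have h0 := hQB (1/2) (by norm_num) (by norm_num)
      rw [rhs_zero (by norm_num) hs, mul_zero] at h0
      exact absurd h0 (not_le.mpr (lhs_pos (by norm_num) (by norm_num)))
    refine ⟨h1, ?_⟩
    -- Step 2: α < p - 1
    by_contra h
    push_neg at h
    have hb : 0 < β * p + α + 1 := by linarith
    rcases lt_or_eq_of_le h with hgt | heq
    · -- case α > p - 1
      set δ : ℝ := α - p + 1 with hδdef
      have hδ : 0 < δ := by simp only [hδdef]; linarith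
      set c : ℝ := (1 - (1/2:ℝ) ^ δ) / δ with hcdef
      have hhalf : (1/2:ℝ) ^ δ < 1 := Real.rpow_lt_one (by norm_num) (by norm_num) hδ
      have hc : 0 < c := div_pos (by linarith) hδ
      set C' : ℝ := C / (β * p + α + 1) with hC'def
      have step : ∀ r : ℝ, r ∈ Ioc (0:ℝ) (1/2) → c ≤ C' * r ^ (α + 1 - p) := by
        rintro r ⟨hr, hr2⟩
        have hr1 : r ≤ 1 := le_trans hr2 (by norm_num)
        have hh := hQB r hr hr1
        rw [lhs_eq hr, tail_eq hr hr1 (by intro hh'; linarith),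
          rhs_eq hr (by linarith)] at hh
        have hrp : (0:ℝ) < r ^ p := Real.rpow_pos_of_pos hr p
        have hmono : c ≤ (1 - r ^ δ) / δ := by
          rw [hcdef]
          gcongr
        have h2 : c * r ^ p ≤ C' * r ^ (α + 1 - p) * r ^ p := by
          calc c * r ^ p ≤ ((1 - r ^ δ) / δ) * r ^ p :=
                mul_le_mul_of_nonneg_right hmono hrp.le
            _ = r ^ p * ((1 - r ^ (α - p + 1)) / (α - p + 1)) := by rw [hδdef]; ring
            _ ≤ C * (r ^ (α + 1) / (β * p + α + 1)) := hh
            _ = C' * r ^ (α + 1 - p) * r ^ p := by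
                rw [show r ^ (α + 1) = r ^ (α + 1 - p) * r ^ p from by
                  rw [← Real.rpow_add hr]; congr 1; ring]
                rw [hC'def]; ring
        exact le_of_mul_le_mul_right h2 hrp
      -- tendsto contradiction
      have hδ' : 0 < α + 1 - p := by linarith
      have ht : Tendsto (fun r : ℝ => C' * r ^ (α + 1 - p)) (nhdsWithin 0 (Ioi (0:ℝ))) (nhds 0) := by
        have hca : ContinuousAt (fun x : ℝ => x ^ (α + 1 - p)) 0 :=
          Real.continuousAt_rpow_const 0 _ (Or.inr hδ'.le)
        have := (tendsto_const_nhds (x := C') (f := nhdsWithin (0:ℝ) (Ioi (0:ℝ)))).mul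
          (hca.tendsto.mono_left nhdsWithin_le_nhds)
        simpa [Real.zero_rpow hδ'.ne'] using this
      have hev : ∀ᶠ r in nhdsWithin 0 (Ioi (0:ℝ)), C' * r ^ (α + 1 - p) < c :=
        ht.eventually_lt_const hc
      have hev2 : ∀ᶠ r in nhdsWithin 0 (Ioi (0:ℝ)), r ∈ Ioc (0:ℝ) (1/2) :=
        Ioc_mem_nhdsGT_of_mem (by constructor <;> norm_num)
      rcases (hev.and hev2).exists with ⟨r, hlt, hmem⟩
      exact absurd (step r hmem) (not_le.mpr hlt)
    · -- case α = p - 1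
      set C' : ℝ := C / (β * p + α + 1) with hC'def
      have hC' : 0 < C' := div_pos hC hb
      have step : ∀ r : ℝ, 0 < r → r ≤ 1 → -Real.log r ≤ C' := by
        intro r hr hr1
        have hh := hQB r hr hr1
        have hap : α - p = -1 := by linarith
        rw [lhs_eq hr, hap, tail_log hr hr1, rhs_eq hr (by linarith)] at hh
        have hrp : (0:ℝ) < r ^ p := Real.rpow_pos_of_pos hr p
        have hpa : r ^ (α + 1) = r ^ p := by rw [show α + 1 = p from by linarith]
        rw [hpa] at hh
        have : r ^ p * -Real.log r ≤ C' * r ^ p := by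
          calc r ^ p * -Real.log r ≤ C * (r ^ p / (β * p + α + 1)) := hh
            _ = C' * r ^ p := by rw [hC'def]; ring
        nlinarith
      have hcontr := step (Real.exp (-(C' + 1))) (Real.exp_pos _)
        (by rw [Real.exp_le_one_iff]; linarith)
      rw [Real.log_exp] at hcontr
      linarith
  · rintro ⟨h1, h2⟩
    have hq : 0 < p - 1 - α := by linarith
    have hb : 0 < β * p + α + 1 := by linarith
    refine ⟨(β * p + α + 1) / (p - 1 - α), div_pos hb hq, ?_⟩
    intro r hr hr1
    rw [lhs_eq hr, tail_eq hr hr1 (by intro hh; linarith), rhs_eq hr (by linarith)]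
    have e1 : r ^ p * ((1 - r ^ (α - p + 1)) / (α - p + 1))
        = (r ^ (α + 1) - r ^ p) / (p - 1 - α) := by
      have hmul : r ^ p * r ^ (α - p + 1) = r ^ (α + 1) := by
        rw [← Real.rpow_add hr]; congr 1; ring
      have hd : p - 1 - α ≠ 0 := hq.ne'
      rw [show α - p + 1 = -(p - 1 - α) by ring, div_neg, mul_neg, ← hmul]
      field_simp
      rw [show -(p - 1 - α) = α - p + 1 by ring]
      ring
    have e2 : (β * p + α + 1) / (p - 1 - α) * (r ^ (α + 1) / (β * p + α + 1))
        = r ^ (α + 1) / (p - 1 - α) := by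
      field_simp
    rw [e1, e2]
    have hrp : (0:ℝ) ≤ r ^ p := Real.rpow_nonneg hr.le p
    exact (div_le_div_iff_of_pos_right hq).mpr (by linarith)

theorem power_weight_mem_QBI_iff (p β α : ℝ) (hp : 1 ≤ p) (hβ1 : -1 < β) (hβ0 : β ≤ 0) :
    QBI β p (fun x => x ^ α) ↔ (-(β * p) - 1 < α ∧ α < p - 1) :=
  power_weight_mem_QBI_iff' p β α hp hβ1 hβ0
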